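/- Let X_i, X_j be independent random elements of 𝒳 with common law μ, let γ₀ : 𝒳 → ℝ be μ-integrable, set Δ₀ = γ₀(X_i) − γ₀(X_j), and assume P(Δ₀ = 0) = 0. Let (γ_τ)_{τ∈[0,τ̄)} be functions on 𝒳 with γ_0 = γ₀ such that sup_x |γ_τ(x) − γ₀(x) − τγ̇(x)| = o(τ) as τ ↓ 0 for some bounded function γ̇. Then the map τ ↦ E[|γ_τ(X_i) − γ_τ(X_j)|] is right-differentiable at τ = 0 with derivative E[sgn(Δ₀)(γ̇(X_i) − γ̇(X_j))]. -/

import Mathlib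

/-!
STATEMENT 5: Right-differentiability at τ = 0 of τ ↦ E[|γ_τ(X_i) − γ_τ(X_j)|] for
independent X_i, X_j ~ μ, when P(γ₀(X_i) = γ₀(X_j)) = 0 and the path τ ↦ γ_τ admits a
bounded derivative γ̇ uniformly in x (sup_x |γ_τ(x) − γ₀(x) − τ γ̇(x)| = o(τ) as τ ↓ 0).
The right derivative is E[sgn(Δ₀)(γ̇(X_i) − γ̇(X_j))], with Δ₀ = γ₀(X_i) − γ₀(X_j).
Independent copies are modelled by the product measure μ ⊗ μ on 𝒳 × 𝒳.
-/

open MeasureTheory Filter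

lemma abs_add_small' {Δ e : ℝ} (h : |e| < |Δ|) : |Δ + e| - |Δ| = Real.sign Δ * e := by
  rcases lt_trichotomy Δ 0 with hΔ | hΔ | hΔ
  · have he := abs_lt.mp h
    rw [abs_of_neg hΔ] at he
    have hneg : Δ + e < 0 := by linarith [he.2]
    rw [abs_of_neg hΔ, abs_of_neg hneg, Real.sign_of_neg hΔ]; ring
  · subst hΔ; simp at h; linarith [abs_nonneg e, h]
  · have he := abs_lt.mp h
    rw [abs_of_pos hΔ] at he
    have hpos : 0 < Δ + e := by linarith [he.1]
    rw [abs_of_pos hΔ, abs_of_pos hpos, Real.sign_of_pos hΔ]; ring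

lemma ptwise_tendsto (Δ c : ℝ) (hΔ : Δ ≠ 0) (A : ℝ → ℝ)
    (hR : ∀ ε > 0, ∃ δ > 0, ∀ τ : ℝ, 0 < τ → τ < δ → |A τ - Δ - τ * c| ≤ ε * τ) :
    Tendsto (fun τ => (|A τ| - |Δ|) / τ) (nhdsWithin 0 (Set.Ioi 0))
      (nhds (Real.sign Δ * c)) := by
  have hRτ : Tendsto (fun τ => (A τ - Δ - τ * c) / τ) (nhdsWithin 0 (Set.Ioi 0)) (nhds 0) := by
    rw [NormedAddCommGroup.tendsto_nhds_zero]
    intro ε hε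
    obtain ⟨δ, hδ, h⟩ := hR (ε / 2) (by positivity)
    filter_upwards [Ioo_mem_nhdsGT hδ] with τ hτ
    have hτpos : (0:ℝ) < τ := hτ.1
    have := h τ hτ.1 hτ.2
    rw [Real.norm_eq_abs, abs_div, abs_of_pos hτpos]
    calc |A τ - Δ - τ * c| / τ ≤ ε / 2 := by
          rw [div_le_iff₀ hτpos]; linarith
      _ < ε := by linarith
  have hτ0 : Tendsto (fun τ : ℝ => τ) (nhdsWithin 0 (Set.Ioi 0)) (nhds 0) :=
    tendsto_id.mono_right nhdsWithin_le_nhds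
  have hAc : Tendsto (fun τ => A τ - Δ) (nhdsWithin 0 (Set.Ioi 0)) (nhds 0) := by
    have h1 : Tendsto (fun τ => (A τ - Δ - τ * c) / τ * τ + τ * c)
        (nhdsWithin 0 (Set.Ioi 0)) (nhds 0) := by
      have := (hRτ.mul hτ0).add (hτ0.mul (tendsto_const_nhds (x := c)))
      simpa using this
    refine h1.congr' ?_
    filter_upwards [self_mem_nhdsWithin] with τ hτ
    have : (τ:ℝ) ≠ 0 := ne_of_gt hτ
    field_simp
    ring
  have hsmall : ∀ᶠ τ in nhdsWithin 0 (Set.Ioi 0), |A τ - Δ| < |Δ| := by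
    have := NormedAddCommGroup.tendsto_nhds_zero.mp hAc |Δ| (abs_pos.mpr hΔ)
    simpa [Real.norm_eq_abs] using this
  have hsign : ∀ᶠ τ in nhdsWithin 0 (Set.Ioi 0),
      Real.sign Δ * ((A τ - Δ - τ * c) / τ + c) = (|A τ| - |Δ|) / τ := by
    filter_upwards [hsmall, self_mem_nhdsWithin] with τ h1 h2
    have hτpos : (0:ℝ) < τ := h2
    have hτne : (τ:ℝ) ≠ 0 := ne_of_gt hτpos
    have key : |A τ| - |Δ| = Real.sign Δ * (A τ - Δ) := by
      have := abs_add_small' (Δ := Δ) (e := A τ - Δ) h1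
      simpa using this
    have heq : (A τ - Δ - τ * c) / τ + c = (A τ - Δ) / τ := by field_simp; ring
    rw [key, heq, mul_div_assoc]
  have hlim : Tendsto (fun τ => Real.sign Δ * ((A τ - Δ - τ * c) / τ + c))
      (nhdsWithin 0 (Set.Ioi 0)) (nhds (Real.sign Δ * c)) := by
    have := (hRτ.add (tendsto_const_nhds (x := c))).const_mul (Real.sign Δ)
    simpa using this
  exact hlim.congr' hsign

theorem right_deriv_expected_abs_fitted_value_gap
    {𝒳 : Type*} [MeasurableSpace 𝒳] (μ : Measure 𝒳) [IsProbabilityMeasure μ]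
    (τbar : ℝ) (hτbar : 0 < τbar)
    (γ : ℝ → 𝒳 → ℝ) (γ₀ γdot : 𝒳 → ℝ) (M : ℝ)
    (hγ0 : γ 0 = γ₀)
    (hγ₀meas : Measurable γ₀)
    (hγ₀int : Integrable γ₀ μ)
    (hγmeas : ∀ τ, Measurable (γ τ))
    (hγdotmeas : Measurable γdot)
    (hγdotbdd : ∀ x, |γdot x| ≤ M)
    (hpath : ∀ ε > 0, ∃ δ > 0, ∀ τ : ℝ, 0 < τ → τ < δ →
      ∀ x, |γ τ x - γ₀ x - τ * γdot x| ≤ ε * τ)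
    (hzero : (μ.prod μ) {p : 𝒳 × 𝒳 | γ₀ p.1 - γ₀ p.2 = 0} = 0) :
    HasDerivWithinAt
      (fun τ : ℝ => ∫ p : 𝒳 × 𝒳, |γ τ p.1 - γ τ p.2| ∂(μ.prod μ))
      (∫ p : 𝒳 × 𝒳, Real.sign (γ₀ p.1 - γ₀ p.2) * (γdot p.1 - γdot p.2) ∂(μ.prod μ))
      (Set.Ici 0) 0 := by
  -- notation
  set ν : Measure (𝒳 × 𝒳) := μ.prod μ with hν
  have hΔmeas : Measurable fun p : 𝒳 × 𝒳 => γ₀ p.1 - γ₀ p.2 :=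
    (hγ₀meas.comp measurable_fst).sub (hγ₀meas.comp measurable_snd)
  -- integrability of γ₀ components
  have hmapfst : Measure.map Prod.fst ν = μ := by
    rw [hν, Measure.map_fst_prod]; simp
  have hmapsnd : Measure.map Prod.snd ν = μ := by
    rw [hν, Measure.map_snd_prod]; simp
  have hint1 : Integrable (fun p : 𝒳 × 𝒳 => γ₀ p.1) ν := by
    have h := hγ₀int
    rw [← hmapfst] at h
    exact (integrable_map_measure h.aestronglyMeasurable measurable_fst.aemeasurable).mp h
  have hint2 : Integrable (fun p : 𝒳 × 𝒳 => γ₀ p.2) ν := by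
    have h := hγ₀int
    rw [← hmapsnd] at h
    exact (integrable_map_measure h.aestronglyMeasurable measurable_snd.aemeasurable).mp h
  have hΔint : Integrable (fun p : 𝒳 × 𝒳 => γ₀ p.1 - γ₀ p.2) ν := hint1.sub hint2
  have habs0int : Integrable (fun p : 𝒳 × 𝒳 => |γ₀ p.1 - γ₀ p.2|) ν := hΔint.abs
  have hM : 0 ≤ M := by
    have hne : Nonempty 𝒳 := by
      by_contra h
      rw [not_nonempty_iff] at h
      have h1 : (μ Set.univ) = 1 := measure_univ
      rw [Set.univ_eq_empty_iff.mpr h, measure_empty] at h1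
      exact zero_ne_one h1
    exact le_trans (abs_nonneg _) (hγdotbdd hne.some)
  obtain ⟨δ₀, hδ₀pos, hδ₀⟩ := hpath (1/2) (by norm_num)
  -- the key uniform bound for τ ∈ (0, δ₀)
  have hkey : ∀ τ : ℝ, 0 < τ → τ < δ₀ → ∀ p : 𝒳 × 𝒳,
      |(|γ τ p.1 - γ τ p.2| - |γ₀ p.1 - γ₀ p.2|)| ≤ (2 * M + 1) * τ := by
    intro τ hτpos hτδ p
    have h1 := hδ₀ τ hτpos hτδ p.1
    have h2 := hδ₀ τ hτpos hτδ p.2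
    have hd1 := hγdotbdd p.1
    have hd2 := hγdotbdd p.2
    have heq : γ τ p.1 - γ τ p.2 - (γ₀ p.1 - γ₀ p.2)
        = (γ τ p.1 - γ₀ p.1 - τ * γdot p.1) - (γ τ p.2 - γ₀ p.2 - τ * γdot p.2)
          + (τ * γdot p.1 - τ * γdot p.2) := by ring
    calc |(|γ τ p.1 - γ τ p.2| - |γ₀ p.1 - γ₀ p.2|)|
        ≤ |γ τ p.1 - γ τ p.2 - (γ₀ p.1 - γ₀ p.2)| := abs_abs_sub_abs_le_abs_sub _ _
      _ = |(γ τ p.1 - γ₀ p.1 - τ * γdot p.1) - (γ τ p.2 - γ₀ p.2 - τ * γdot p.2)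
          + (τ * γdot p.1 - τ * γdot p.2)| := by rw [heq]
      _ ≤ |(γ τ p.1 - γ₀ p.1 - τ * γdot p.1) - (γ τ p.2 - γ₀ p.2 - τ * γdot p.2)|
          + |τ * γdot p.1 - τ * γdot p.2| := abs_add_le _ _
      _ ≤ (|γ τ p.1 - γ₀ p.1 - τ * γdot p.1| + |γ τ p.2 - γ₀ p.2 - τ * γdot p.2|)
          + (|τ * γdot p.1| + |τ * γdot p.2|) :=
            add_le_add (abs_sub _ _) (abs_sub _ _)
      _ ≤ (1/2 * τ + 1/2 * τ) + (τ * M + τ * M) := by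
            have e1 : |τ * γdot p.1| = τ * |γdot p.1| := by
              rw [abs_mul, abs_of_pos hτpos]
            have e2 : |τ * γdot p.2| = τ * |γdot p.2| := by
              rw [abs_mul, abs_of_pos hτpos]
            rw [e1, e2]
            have := mul_le_mul_of_nonneg_left hd1 hτpos.le
            have := mul_le_mul_of_nonneg_left hd2 hτpos.le
            gcongr <;> assumption
      _ = (2 * M + 1) * τ := by ring
  -- integrability of the τ-integrand for τ ∈ (0, δ₀)
  have hτint : ∀ τ : ℝ, 0 < τ → τ < δ₀ →
      Integrable (fun p : 𝒳 × 𝒳 => |γ τ p.1 - γ τ p.2|) ν := by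
    intro τ hτpos hτδ
    refine (habs0int.add (integrable_const ((2 * M + 1) * τ))).mono'
      ((((hγmeas τ).comp measurable_fst).sub
        ((hγmeas τ).comp measurable_snd)).abs.aestronglyMeasurable) ?_
    refine Filter.Eventually.of_forall fun p => ?_
    have := hkey τ hτpos hτδ p
    have h := abs_le.mp this
    rw [Real.norm_eq_abs, abs_abs]
    simp only [Pi.add_apply]
    linarith [h.2]
  -- a.e. pointwise convergence of the difference quotients
  have hae : ∀ᵐ p ∂ν, γ₀ p.1 - γ₀ p.2 ≠ 0 := by
    rw [ae_iff]
    simpa using hzero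
  have hptwise : ∀ᵐ p ∂ν,
      Tendsto (fun τ => (|γ τ p.1 - γ τ p.2| - |γ₀ p.1 - γ₀ p.2|) / τ)
        (nhdsWithin 0 (Set.Ioi 0))
        (nhds (Real.sign (γ₀ p.1 - γ₀ p.2) * (γdot p.1 - γdot p.2))) := by
    filter_upwards [hae] with p hp
    refine ptwise_tendsto _ _ hp _ ?_
    intro ε hε
    obtain ⟨δ, hδ, h⟩ := hpath (ε / 2) (by positivity)
    refine ⟨δ, hδ, fun τ hτpos hτδ => ?_⟩
    have h1 := h τ hτpos hτδ p.1
    have h2 := h τ hτpos hτδ p.2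
    have heq : γ τ p.1 - γ τ p.2 - (γ₀ p.1 - γ₀ p.2) - τ * (γdot p.1 - γdot p.2)
        = (γ τ p.1 - γ₀ p.1 - τ * γdot p.1) - (γ τ p.2 - γ₀ p.2 - τ * γdot p.2) := by
      ring
    calc |γ τ p.1 - γ τ p.2 - (γ₀ p.1 - γ₀ p.2) - τ * (γdot p.1 - γdot p.2)|
        = |(γ τ p.1 - γ₀ p.1 - τ * γdot p.1) - (γ τ p.2 - γ₀ p.2 - τ * γdot p.2)| := by
          rw [heq]
      _ ≤ |γ τ p.1 - γ₀ p.1 - τ * γdot p.1| + |γ τ p.2 - γ₀ p.2 - τ * γdot p.2| :=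
          abs_sub _ _
      _ ≤ ε / 2 * τ + ε / 2 * τ := add_le_add h1 h2
      _ = ε * τ := by ring
  -- dominated convergence for the difference quotients
  have hDCT : Tendsto
      (fun τ => ∫ p : 𝒳 × 𝒳, (|γ τ p.1 - γ τ p.2| - |γ₀ p.1 - γ₀ p.2|) / τ ∂ν)
      (nhdsWithin 0 (Set.Ioi 0))
      (nhds (∫ p : 𝒳 × 𝒳, Real.sign (γ₀ p.1 - γ₀ p.2) * (γdot p.1 - γdot p.2) ∂ν)) := by
    refine tendsto_integral_filter_of_dominated_convergence
      (fun _ => 2 * M + 1) ?_ ?_ (integrable_const _) hptwise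
    · refine Filter.Eventually.of_forall fun τ => ?_
      exact (((((hγmeas τ).comp measurable_fst).sub
        ((hγmeas τ).comp measurable_snd)).abs.sub hΔmeas.abs).div_const τ).aestronglyMeasurable
    · filter_upwards [Ioo_mem_nhdsGT hδ₀pos] with τ hτ
      refine Filter.Eventually.of_forall fun p => ?_
      have hτpos : (0:ℝ) < τ := hτ.1
      have := hkey τ hτ.1 hτ.2 p
      rw [Real.norm_eq_abs, abs_div, abs_of_pos hτpos, div_le_iff₀ hτpos]
      calc |(|γ τ p.1 - γ τ p.2| - |γ₀ p.1 - γ₀ p.2|)| ≤ (2 * M + 1) * τ := this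
        _ = (2 * M + 1) * τ := rfl
  -- identify the difference quotient of the integrals with the integral above
  have hslope : ∀ᶠ τ in nhdsWithin 0 (Set.Ioi 0),
      ∫ p : 𝒳 × 𝒳, (|γ τ p.1 - γ τ p.2| - |γ₀ p.1 - γ₀ p.2|) / τ ∂ν
        = slope (fun τ : ℝ => ∫ p : 𝒳 × 𝒳, |γ τ p.1 - γ τ p.2| ∂ν) 0 τ := by
    filter_upwards [Ioo_mem_nhdsGT hδ₀pos] with τ hτ
    rw [slope_def_field]
    rw [integral_div, integral_sub (hτint τ hτ.1 hτ.2) habs0int]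
    rw [hγ0]
    simp [div_eq_div_iff]
  have hfinal : Tendsto
      (slope (fun τ : ℝ => ∫ p : 𝒳 × 𝒳, |γ τ p.1 - γ τ p.2| ∂ν) 0)
      (nhdsWithin 0 (Set.Ioi 0))
      (nhds (∫ p : 𝒳 × 𝒳, Real.sign (γ₀ p.1 - γ₀ p.2) * (γdot p.1 - γdot p.2) ∂ν)) :=
    hDCT.congr' hslope
  rw [hasDerivWithinAt_iff_tendsto_slope]
  rw [show Set.Ici (0:ℝ) \ {0} = Set.Ioi 0 from by
    ext x; simp only [Set.mem_diff, Set.mem_Ici, Set.mem_singleton_iff, Set.mem_Ioi]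
    exact ⟨fun h => lt_of_le_of_ne h.1 (Ne.symm h.2), fun h => ⟨h.le, h.ne'⟩⟩]
  exact hfinal
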